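/- On ℂ³ with standard symplectic form ω = Σₖ dxₖ∧dyₖ (zₖ = xₖ + iyₖ), the three functions b₁ = Im(z₁z₂z₃), b₂ = |z₁|² − |z₂|², b₃ = |z₁|² − |z₃|² pairwise Poisson commute. -/

import Mathlib

/-- Poisson bracket on ℂ³ ≅ ℝ⁶ (with zₖ = xₖ + iyₖ) associated to ω = Σₖ dxₖ∧dyₖ:
{f,g} = Σₖ (∂f/∂xₖ ∂g/∂yₖ − ∂f/∂yₖ ∂g/∂xₖ), where ∂/∂xₖ is the direction eₖ and
∂/∂yₖ is the direction i·eₖ. -/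
noncomputable def poisson3 (f g : ℂ × ℂ × ℂ → ℝ) (p : ℂ × ℂ × ℂ) : ℝ :=
  (fderiv ℝ f p (1, 0, 0) * fderiv ℝ g p (Complex.I, 0, 0)
      - fderiv ℝ f p (Complex.I, 0, 0) * fderiv ℝ g p (1, 0, 0))
    + (fderiv ℝ f p (0, 1, 0) * fderiv ℝ g p (0, Complex.I, 0)
      - fderiv ℝ f p (0, Complex.I, 0) * fderiv ℝ g p (0, 1, 0))
    + (fderiv ℝ f p (0, 0, 1) * fderiv ℝ g p (0, 0, Complex.I)
      - fderiv ℝ f p (0, 0, Complex.I) * fderiv ℝ g p (0, 0, 1))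

noncomputable def hlB1 (p : ℂ × ℂ × ℂ) : ℝ := (p.1 * p.2.1 * p.2.2).im
noncomputable def hlB2 (p : ℂ × ℂ × ℂ) : ℝ := ‖p.1‖ ^ 2 - ‖p.2.1‖ ^ 2
noncomputable def hlB3 (p : ℂ × ℂ × ℂ) : ℝ := ‖p.1‖ ^ 2 - ‖p.2.2‖ ^ 2

section aux

open Complex ContinuousLinearMap

lemma fderiv_hlB1_apply (p v : ℂ × ℂ × ℂ) :
    fderiv ℝ hlB1 p v
      = (v.1 * p.2.1 * p.2.2 + p.1 * v.2.1 * p.2.2 + p.1 * p.2.1 * v.2.2).im := by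
  have h1 : HasFDerivAt (fun q : ℂ × ℂ × ℂ => q.1)
      (ContinuousLinearMap.fst ℝ ℂ (ℂ × ℂ)) p := hasFDerivAt_fst
  have h2 : HasFDerivAt (fun q : ℂ × ℂ × ℂ => q.2.1)
      ((ContinuousLinearMap.fst ℝ ℂ ℂ).comp (ContinuousLinearMap.snd ℝ ℂ (ℂ × ℂ))) p :=
    hasFDerivAt_fst.comp p hasFDerivAt_snd
  have h3 : HasFDerivAt (fun q : ℂ × ℂ × ℂ => q.2.2)
      ((ContinuousLinearMap.snd ℝ ℂ ℂ).comp (ContinuousLinearMap.snd ℝ ℂ (ℂ × ℂ))) p :=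
    hasFDerivAt_snd.comp p hasFDerivAt_snd
  have hm := (h1.mul h2).mul h3
  have h := Complex.imCLM.hasFDerivAt.comp p hm
  simp only [Function.comp_def, Complex.imCLM_apply, Pi.mul_apply] at h
  rw [show hlB1 = fun q : ℂ × ℂ × ℂ => (q.1 * q.2.1 * q.2.2).im from rfl, h.fderiv]
  simp [Complex.smul_re, Complex.smul_im, smul_eq_mul]
  ring

lemma fderiv_abs1 (p v : ℂ × ℂ × ℂ) :
    fderiv ℝ (fun q : ℂ × ℂ × ℂ => ‖q.1‖ ^ 2) p v
      = 2 * (p.1.re * v.1.re + p.1.im * v.1.im) := by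
  have heq : (fun q : ℂ × ℂ × ℂ => ‖q.1‖ ^ 2)
      = fun q : ℂ × ℂ × ℂ => (q.1 * (starRingEnd ℂ) q.1).re := by
    funext q; rw [Complex.mul_conj]; simp [Complex.sq_norm]
  have h1 : HasFDerivAt (fun q : ℂ × ℂ × ℂ => q.1)
      (ContinuousLinearMap.fst ℝ ℂ (ℂ × ℂ)) p := hasFDerivAt_fst
  have hc : HasFDerivAt (fun q : ℂ × ℂ × ℂ => (starRingEnd ℂ) q.1)
      ((Complex.conjCLE : ℂ →L[ℝ] ℂ).comp (ContinuousLinearMap.fst ℝ ℂ (ℂ × ℂ))) p :=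
    Complex.conjCLE.hasFDerivAt.comp p hasFDerivAt_fst
  have h := Complex.reCLM.hasFDerivAt.comp p (h1.mul hc)
  simp only [Function.comp_def, Complex.reCLM_apply, Pi.mul_apply] at h
  rw [heq, h.fderiv]
  simp [Complex.smul_re, smul_eq_mul, Complex.mul_re]
  ring

lemma fderiv_abs2 (p v : ℂ × ℂ × ℂ) :
    fderiv ℝ (fun q : ℂ × ℂ × ℂ => ‖q.2.1‖ ^ 2) p v
      = 2 * (p.2.1.re * v.2.1.re + p.2.1.im * v.2.1.im) := by
  have heq : (fun q : ℂ × ℂ × ℂ => ‖q.2.1‖ ^ 2)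
      = fun q : ℂ × ℂ × ℂ => (q.2.1 * (starRingEnd ℂ) q.2.1).re := by
    funext q; rw [Complex.mul_conj]; simp [Complex.sq_norm]
  have h1 : HasFDerivAt (fun q : ℂ × ℂ × ℂ => q.2.1)
      ((ContinuousLinearMap.fst ℝ ℂ ℂ).comp (ContinuousLinearMap.snd ℝ ℂ (ℂ × ℂ))) p :=
    hasFDerivAt_fst.comp p hasFDerivAt_snd
  have hc : HasFDerivAt (fun q : ℂ × ℂ × ℂ => (starRingEnd ℂ) q.2.1)
      ((Complex.conjCLE : ℂ →L[ℝ] ℂ).comp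
        ((ContinuousLinearMap.fst ℝ ℂ ℂ).comp (ContinuousLinearMap.snd ℝ ℂ (ℂ × ℂ)))) p :=
    Complex.conjCLE.hasFDerivAt.comp p h1
  have h := Complex.reCLM.hasFDerivAt.comp p (h1.mul hc)
  simp only [Function.comp_def, Complex.reCLM_apply, Pi.mul_apply] at h
  rw [heq, h.fderiv]
  simp [Complex.smul_re, smul_eq_mul, Complex.mul_re]
  ring

lemma fderiv_abs3 (p v : ℂ × ℂ × ℂ) :
    fderiv ℝ (fun q : ℂ × ℂ × ℂ => ‖q.2.2‖ ^ 2) p v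
      = 2 * (p.2.2.re * v.2.2.re + p.2.2.im * v.2.2.im) := by
  have heq : (fun q : ℂ × ℂ × ℂ => ‖q.2.2‖ ^ 2)
      = fun q : ℂ × ℂ × ℂ => (q.2.2 * (starRingEnd ℂ) q.2.2).re := by
    funext q; rw [Complex.mul_conj]; simp [Complex.sq_norm]
  have h1 : HasFDerivAt (fun q : ℂ × ℂ × ℂ => q.2.2)
      ((ContinuousLinearMap.snd ℝ ℂ ℂ).comp (ContinuousLinearMap.snd ℝ ℂ (ℂ × ℂ))) p :=
    hasFDerivAt_snd.comp p hasFDerivAt_snd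
  have hc : HasFDerivAt (fun q : ℂ × ℂ × ℂ => (starRingEnd ℂ) q.2.2)
      ((Complex.conjCLE : ℂ →L[ℝ] ℂ).comp
        ((ContinuousLinearMap.snd ℝ ℂ ℂ).comp (ContinuousLinearMap.snd ℝ ℂ (ℂ × ℂ)))) p :=
    Complex.conjCLE.hasFDerivAt.comp p h1
  have h := Complex.reCLM.hasFDerivAt.comp p (h1.mul hc)
  simp only [Function.comp_def, Complex.reCLM_apply, Pi.mul_apply] at h
  rw [heq, h.fderiv]
  simp [Complex.smul_re, smul_eq_mul, Complex.mul_re]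
  ring

lemma diff_abs1 (p : ℂ × ℂ × ℂ) :
    DifferentiableAt ℝ (fun q : ℂ × ℂ × ℂ => ‖q.1‖ ^ 2) p := by
  have heq : (fun q : ℂ × ℂ × ℂ => ‖q.1‖ ^ 2)
      = fun q : ℂ × ℂ × ℂ => (q.1 * (starRingEnd ℂ) q.1).re := by
    funext q; rw [Complex.mul_conj]; simp [Complex.sq_norm]
  rw [heq]
  exact Complex.reCLM.differentiable.differentiableAt.comp p
    ((differentiable_fst.differentiableAt).mul
      ((Complex.conjCLE.differentiable.differentiableAt).comp p
        differentiable_fst.differentiableAt))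

lemma diff_abs2 (p : ℂ × ℂ × ℂ) :
    DifferentiableAt ℝ (fun q : ℂ × ℂ × ℂ => ‖q.2.1‖ ^ 2) p := by
  have heq : (fun q : ℂ × ℂ × ℂ => ‖q.2.1‖ ^ 2)
      = fun q : ℂ × ℂ × ℂ => (q.2.1 * (starRingEnd ℂ) q.2.1).re := by
    funext q; rw [Complex.mul_conj]; simp [Complex.sq_norm]
  rw [heq]
  have h1 : DifferentiableAt ℝ (fun q : ℂ × ℂ × ℂ => q.2.1) p :=
    differentiable_fst.differentiableAt.comp p differentiable_snd.differentiableAt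
  exact Complex.reCLM.differentiable.differentiableAt.comp p
    (h1.mul ((Complex.conjCLE.differentiable.differentiableAt).comp p h1))

lemma diff_abs3 (p : ℂ × ℂ × ℂ) :
    DifferentiableAt ℝ (fun q : ℂ × ℂ × ℂ => ‖q.2.2‖ ^ 2) p := by
  have heq : (fun q : ℂ × ℂ × ℂ => ‖q.2.2‖ ^ 2)
      = fun q : ℂ × ℂ × ℂ => (q.2.2 * (starRingEnd ℂ) q.2.2).re := by
    funext q; rw [Complex.mul_conj]; simp [Complex.sq_norm]
  rw [heq]
  have h1 : DifferentiableAt ℝ (fun q : ℂ × ℂ × ℂ => q.2.2) p :=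
    differentiable_snd.differentiableAt.comp p differentiable_snd.differentiableAt
  exact Complex.reCLM.differentiable.differentiableAt.comp p
    (h1.mul ((Complex.conjCLE.differentiable.differentiableAt).comp p h1))

lemma fderiv_hlB2_apply (p v : ℂ × ℂ × ℂ) :
    fderiv ℝ hlB2 p v
      = 2 * (p.1.re * v.1.re + p.1.im * v.1.im)
        - 2 * (p.2.1.re * v.2.1.re + p.2.1.im * v.2.1.im) := by
  have : fderiv ℝ hlB2 p
      = fderiv ℝ (fun q : ℂ × ℂ × ℂ => ‖q.1‖ ^ 2) p
        - fderiv ℝ (fun q : ℂ × ℂ × ℂ => ‖q.2.1‖ ^ 2) p :=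
    fderiv_sub (diff_abs1 p) (diff_abs2 p)
  rw [show hlB2 = fun q : ℂ × ℂ × ℂ =>
      ‖q.1‖ ^ 2 - ‖q.2.1‖ ^ 2 from rfl] at *
  rw [this, ContinuousLinearMap.sub_apply, fderiv_abs1, fderiv_abs2]

lemma fderiv_hlB3_apply (p v : ℂ × ℂ × ℂ) :
    fderiv ℝ hlB3 p v
      = 2 * (p.1.re * v.1.re + p.1.im * v.1.im)
        - 2 * (p.2.2.re * v.2.2.re + p.2.2.im * v.2.2.im) := by
  have : fderiv ℝ hlB3 p
      = fderiv ℝ (fun q : ℂ × ℂ × ℂ => ‖q.1‖ ^ 2) p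
        - fderiv ℝ (fun q : ℂ × ℂ × ℂ => ‖q.2.2‖ ^ 2) p :=
    fderiv_sub (diff_abs1 p) (diff_abs3 p)
  rw [this, ContinuousLinearMap.sub_apply, fderiv_abs1, fderiv_abs3]

end aux

/-- On ℂ³, b₁ = Im(z₁z₂z₃), b₂ = |z₁|² − |z₂|², b₃ = |z₁|² − |z₃|² pairwise Poisson
commute. -/
theorem stmt2 :
    ∀ p : ℂ × ℂ × ℂ,
      poisson3 hlB1 hlB2 p = 0 ∧ poisson3 hlB1 hlB3 p = 0 ∧ poisson3 hlB2 hlB3 p = 0 := by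
  intro p
  refine ⟨?_, ?_, ?_⟩ <;>
  · simp only [poisson3, fderiv_hlB1_apply, fderiv_hlB2_apply, fderiv_hlB3_apply]
    simp [Complex.add_im, Complex.mul_im, Complex.mul_re, Complex.I_re, Complex.I_im]
    ring
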